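/- arXiv:1803.10953 — 5 statements merged into one kernel-verified Lean document; each statement's English description precedes it below -/
import Mathlib

section
/- For every n ≥ 1, the axiom K_n: □p₀ ∧ □p₁ ∧ … ∧ □p_n → □⋁_{0≤i<j≤n}(p_i ∧ p_j) is valid on every n-model under the diagonal semantics; that is, for all WAML formulas φ₀,…,φ_n, every n-model M, and every world w of M, if M,w ⊨ □φ_i for all i ∈ [0,n], then M,w ⊨ □⋁_{0≤i<j≤n}(φ_i ∧ φ_j). -/
namespace WAML

/-- The language of WAML: atoms, negation, conjunction, and the (diagonal) box. -/
inductive Formula : Type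
  | atom : ℕ → Formula
  | neg : Formula → Formula
  | and : Formula → Formula → Formula
  | box : Formula → Formula

namespace Formula

def imp (φ ψ : Formula) : Formula := neg (and φ (neg ψ))
def or (φ ψ : Formula) : Formula := neg (and (neg φ) (neg ψ))
def dia (φ : Formula) : Formula := neg (box (neg φ))
def bot : Formula := and (atom 0) (neg (atom 0))

/-- The set of propositional letters occurring in a formula. -/
def letters : Formula → Set ℕ
  | atom p => {p}
  | neg φ => letters φ
  | and φ ψ => letters φ ∪ letters ψ
  | box φ => letters φ

end Formula

/-- Conjunction of a list of formulas. -/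
def conjList : List Formula → Formula
  | [] => Formula.neg Formula.bot
  | [φ] => φ
  | φ :: ψ :: rest => Formula.and φ (conjList (ψ :: rest))

/-- Disjunction of a list of formulas. -/
def disjList : List Formula → Formula
  | [] => Formula.bot
  | [φ] => φ
  | φ :: ψ :: rest => Formula.or φ (disjList (ψ :: rest))

/-- ⋁_{0 ≤ i < j ≤ n} (φ_i ∧ φ_j) -/
def pairDisj (n : ℕ) (φ : Fin (n+1) → Formula) : Formula :=
  disjList (((List.finRange (n+1)).product (List.finRange (n+1))).filterMap
    (fun p => if p.1 < p.2 then some (Formula.and (φ p.1) (φ p.2)) else none))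

/-- The axiom (scheme) K_n : □φ₀ ∧ ⋯ ∧ □φ_n → □⋁_{0 ≤ i < j ≤ n} (φ_i ∧ φ_j). -/
def KnAxiom (n : ℕ) (φ : Fin (n+1) → Formula) : Formula :=
  Formula.imp (conjList ((List.finRange (n+1)).map (fun i => Formula.box (φ i))))
    (Formula.box (pairDisj n φ))

/-- A propositional tautology (including all substitution instances): a formula true under
every valuation of formulas respecting ¬ and ∧. -/
def Tautology (φ : Formula) : Prop :=
  ∀ v : Formula → Prop,
    (∀ ψ, v (Formula.neg ψ) ↔ ¬ v ψ) →
    (∀ ψ χ, v (Formula.and ψ χ) ↔ v ψ ∧ v χ) →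
    v φ

/-- The proof system 𝕂_n: propositional tautologies, K_n, modus ponens, necessitation, RM. -/
inductive KProof (n : ℕ) : Formula → Prop
  | taut {φ} : Tautology φ → KProof n φ
  | kn (φ : Fin (n+1) → Formula) : KProof n (KnAxiom n φ)
  | mp {φ ψ} : KProof n (Formula.imp φ ψ) → KProof n φ → KProof n ψ
  | nec {φ} : KProof n φ → KProof n (Formula.box φ)
  | rm {φ ψ} : KProof n (Formula.imp φ ψ) →
      KProof n (Formula.imp (Formula.box φ) (Formula.box ψ))

/-- An n-model: a nonempty set of worlds, an (n+1)-ary relation, a valuation. -/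
structure NModel (n : ℕ) where
  World : Type
  nonempty : Nonempty World
  R : World → (Fin n → World) → Prop
  V : World → ℕ → Prop

/-- Diagonal semantics. -/
def Sat {n : ℕ} (M : NModel n) : M.World → Formula → Prop
  | w, .atom p => M.V w p
  | w, .neg φ => ¬ Sat M w φ
  | w, .and φ ψ => Sat M w φ ∧ Sat M w ψ
  | w, .box φ => ∀ v : Fin n → M.World, M.R w v → ∃ i, Sat M (v i) φ

/-- wa^n-bisimulation between two n-models. -/
def IsBisim {n : ℕ} (M M' : NModel n) (Z : M.World → M'.World → Prop) : Prop :=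
  (∃ w w', Z w w') ∧
  (∀ w w', Z w w' → ∀ p, M.V w p ↔ M'.V w' p) ∧
  (∀ w w' (v : Fin n → M.World), Z w w' → M.R w v →
    ∃ v' : Fin n → M'.World, M'.R w' v' ∧ ∀ j, ∃ i, Z (v i) (v' j)) ∧
  (∀ w w' (v' : Fin n → M'.World), Z w w' → M'.R w' v' →
    ∃ v : Fin n → M.World, M.R w v ∧ ∀ i, ∃ j, Z (v i) (v' j))

/-- wa^n-bisimilarity of pointed n-models. -/
def Bisimilar {n : ℕ} (M M' : NModel n) (w : M.World) (w' : M'.World) : Prop :=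
  ∃ Z, IsBisim M M' Z ∧ Z w w'

/-- Image-finiteness: each world has finitely many successor n-tuples. -/
def ImageFinite {n : ℕ} (M : NModel n) : Prop :=
  ∀ w : M.World, {v : Fin n → M.World | M.R w v}.Finite

/-- First-order correspondence language L¹_n: formulas with free variables among Fin k
(de Bruijn style, `all` binds the last variable). -/
inductive FO (n : ℕ) : ℕ → Type
  | pred {k} : ℕ → Fin k → FO n k
  | rel {k} : (Fin (n+1) → Fin k) → FO n k
  | eq {k} : Fin k → Fin k → FO n k
  | fal {k} : FO n k
  | not {k} : FO n k → FO n k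
  | and {k} : FO n k → FO n k → FO n k
  | or {k} : FO n k → FO n k → FO n k
  | imp {k} : FO n k → FO n k → FO n k
  | all {k} : FO n (k+1) → FO n k

/-- Realization of first-order formulas in an n-model (seen as an L¹_n-structure). -/
def FO.Realize {n : ℕ} (M : NModel n) : ∀ {k}, FO n k → (Fin k → M.World) → Prop
  | _, .pred p x, a => M.V (a x) p
  | _, .rel ts, a => M.R (a (ts 0)) (fun i => a (ts i.succ))
  | _, .eq x y, a => a x = a y
  | _, .fal, _ => False
  | _, .not φ, a => ¬ FO.Realize M φ a
  | _, .and φ ψ, a => FO.Realize M φ a ∧ FO.Realize M ψ a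
  | _, .or φ ψ, a => FO.Realize M φ a ∨ FO.Realize M ψ a
  | _, .imp φ ψ, a => FO.Realize M φ a → FO.Realize M ψ a
  | _, .all φ, a => ∀ x, FO.Realize M φ (Fin.snoc a x)

/-- Quantifier rank. -/
def FO.qr {n : ℕ} : ∀ {k}, FO n k → ℕ
  | _, .pred _ _ => 0
  | _, .rel _ => 0
  | _, .eq _ _ => 0
  | _, .fal => 0
  | _, .not φ => φ.qr
  | _, .and φ ψ => max φ.qr ψ.qr
  | _, .or φ ψ => max φ.qr ψ.qr
  | _, .imp φ ψ => max φ.qr ψ.qr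
  | _, .all φ => φ.qr + 1

/-- Renaming of free variables. -/
def FO.rename {n : ℕ} : ∀ {k k'}, (Fin k → Fin k') → FO n k → FO n k'
  | _, _, f, .pred p x => .pred p (f x)
  | _, _, f, .rel ts => .rel (fun i => f (ts i))
  | _, _, f, .eq x y => .eq (f x) (f y)
  | _, _, _, .fal => .fal
  | _, _, f, .not φ => .not (φ.rename f)
  | _, _, f, .and φ ψ => .and (φ.rename f) (ψ.rename f)
  | _, _, f, .or φ ψ => .or (φ.rename f) (ψ.rename f)
  | _, _, f, .imp φ ψ => .imp (φ.rename f) (ψ.rename f)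
  | _, _, f, .all φ =>
      .all (φ.rename (fun j => Fin.lastCases (Fin.last _) (fun a => (f a).castSucc) j))

/-- A block of m universal quantifiers (binding the last m variables). -/
def FO.alls {n k : ℕ} : ∀ (m : ℕ), FO n (k + m) → FO n k
  | 0, φ => φ
  | m+1, φ => FO.alls m φ.all

/-- Disjunction of a list of first-order formulas. -/
def FO.disjList {n k : ℕ} : List (FO n k) → FO n k
  | [] => .fal
  | [φ] => φ
  | φ :: ψ :: rest => .or φ (FO.disjList (ψ :: rest))

/-- The standard translation ST_x (with x the unique free variable). -/
def ST (n : ℕ) : Formula → FO n 1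
  | .atom p => .pred p 0
  | .neg φ => .not (ST n φ)
  | .and φ ψ => .and (ST n φ) (ST n ψ)
  | .box φ =>
      let ψ := ST n φ
      FO.alls n (FO.imp
        (.rel (Fin.cases (Fin.castAdd n (0 : Fin 1)) (fun i => Fin.natAdd 1 i)))
        (FO.disjList ((List.finRange n).map
          (fun i => ψ.rename (fun _ => Fin.natAdd 1 i)))))

/-- α(x) (one free variable) is invariant under wa^n-bisimulation. -/
def BisimInvariant (n : ℕ) (α : FO n 1) : Prop :=
  ∀ (M N : NModel n) (Z : M.World → N.World → Prop) (w : M.World) (v : N.World),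
    IsBisim M N Z → Z w v →
    (FO.Realize M α (fun _ => w) ↔ FO.Realize N α (fun _ => v))

/-- α(x) is invariant under wa^n-bisimulation between finite n-models. -/
def BisimInvariantFin (n : ℕ) (α : FO n 1) : Prop :=
  ∀ (M N : NModel n) (Z : M.World → N.World → Prop) (w : M.World) (v : N.World),
    Finite M.World → Finite N.World → IsBisim M N Z → Z w v →
    (FO.Realize M α (fun _ => w) ↔ FO.Realize N α (fun _ => v))

/-- Admissible sequences for the unraveling of M around w. The first entry is
((w,…,w), 1) (index 0 in 0-based counting) and consecutive entries are related by R. -/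
def GoodSeq {n : ℕ} [NeZero n] (M : NModel n) (w : M.World)
    (s : List ((Fin n → M.World) × Fin n)) : Prop :=
  (∃ rest, s = ((fun _ => w), (0 : Fin n)) :: rest) ∧
  List.Chain' (fun a b => M.R (a.1 a.2) b.1) s

/-- The world of M corresponding to a sequence: v⃗_m[i_m] (and w for the empty list). -/
def rmap {n : ℕ} (M : NModel n) (w : M.World)
    (s : List ((Fin n → M.World) × Fin n)) : M.World :=
  match s.getLast? with
  | some a => a.1 a.2
  | none => w

/-- The unraveling M_w of M around w. -/
def Unravel {n : ℕ} [NeZero n] (M : NModel n) (w : M.World) : NModel n where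
  World := { s : List ((Fin n → M.World) × Fin n) // GoodSeq M w s }
  nonempty := ⟨⟨[((fun _ => w), 0)], ⟨⟨[], rfl⟩, List.isChain_singleton _⟩⟩⟩
  R := fun s₀ t =>
    M.R (rmap M w s₀.val) (fun i => rmap M w (t i).val) ∧
    ∀ i, ∃ a, (t i).val = s₀.val ++ [a]
  V := fun s p => M.V (rmap M w s.val) p

/-- The root ⟨((w,…,w),1)⟩ of the unraveling. -/
def unravelRoot {n : ℕ} [NeZero n] (M : NModel n) (w : M.World) :
    (Unravel M w).World :=
  ⟨[((fun _ => w), 0)], ⟨⟨[], rfl⟩, List.isChain_singleton _⟩⟩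

/-- The bounded unraveling M_w|_l : the submodel of M_w of worlds of level at most l. -/
def UnravelB {n : ℕ} [NeZero n] (M : NModel n) (w : M.World) (l : ℕ) : NModel n where
  World := { s : List ((Fin n → M.World) × Fin n) // GoodSeq M w s ∧ s.length ≤ l + 1 }
  nonempty := ⟨⟨[((fun _ => w), 0)], ⟨⟨⟨[], rfl⟩, List.isChain_singleton _⟩, by simp⟩⟩⟩
  R := fun s₀ t =>
    M.R (rmap M w s₀.val) (fun i => rmap M w (t i).val) ∧
    ∀ i, ∃ a, (t i).val = s₀.val ++ [a]
  V := fun s p => M.V (rmap M w s.val) p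

/-- The root of the bounded unraveling. -/
def unravelBRoot {n : ℕ} [NeZero n] (M : NModel n) (w : M.World) (l : ℕ) :
    (UnravelB M w l).World :=
  ⟨[((fun _ => w), 0)], ⟨⟨⟨[], rfl⟩, List.isChain_singleton _⟩, by simp⟩⟩

/-- R^c x y : y is a member of some successor tuple of x. -/
def Rc {n : ℕ} (M : NModel n) (x y : M.World) : Prop :=
  ∃ v : Fin n → M.World, M.R x v ∧ ∃ i, y = v i

/-- The undirected edge relation induced by R^c. -/
def Edge {n : ℕ} (M : NModel n) (x y : M.World) : Prop := Rc M x y ∨ Rc M y x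

/-- There is an undirected R^c-path of length m from x to y. -/
def HasPath {n : ℕ} (M : NModel n) (x y : M.World) (m : ℕ) : Prop :=
  ∃ f : ℕ → M.World, f 0 = x ∧ f m = y ∧ ∀ i < m, Edge M (f i) (f (i+1))

/-- The distance between worlds, in ℕ ∪ {ω} (ω = ⊤ if there is no path). -/
noncomputable def dist {n : ℕ} (M : NModel n) (x y : M.World) : ℕ∞ :=
  sInf {c : ℕ∞ | ∃ m : ℕ, c = (m : ℕ∞) ∧ HasPath M x y m}

/-- One literal among the letters r₁,…,r_m, i.e. the atoms 2,…,m+1. -/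
def IsLit (m : ℕ) (φ : Formula) : Prop :=
  ∃ j, j < m ∧ (φ = Formula.atom (j+2) ∨ φ = Formula.neg (Formula.atom (j+2)))

/-- A conjunction of literals over the letters r₁,…,r_m. -/
inductive IsConjLits (m : ℕ) : Formula → Prop
  | lit {φ} : IsLit m φ → IsConjLits m φ
  | conj {φ ψ} : IsConjLits m φ → IsConjLits m ψ → IsConjLits m (Formula.and φ ψ)

/-- The Craig Interpolation Property for 𝕂_n. -/
def HasCIP (n : ℕ) : Prop :=
  ∀ φ ψ : Formula, KProof n (φ.imp ψ) →
    ∃ γ : Formula, γ.letters ⊆ φ.letters ∩ ψ.letters ∧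
      KProof n (φ.imp γ) ∧ KProof n (γ.imp ψ)


lemma sat_or {n : ℕ} (M : NModel n) (x : M.World) (a b : Formula) :
    Sat M x (Formula.or a b) ↔ Sat M x a ∨ Sat M x b := by
  simp only [Formula.or, Sat]; tauto

lemma sat_disjList {n : ℕ} (M : NModel n) (x : M.World) :
    ∀ (L : List Formula) (ψ : Formula), ψ ∈ L → Sat M x ψ → Sat M x (disjList L)
  | [], _, h, _ => by simp at h
  | [χ], ψ, h, hs => by
      simp only [List.mem_singleton] at h; subst h; simpa [disjList] using hs
  | χ :: χ' :: rest, ψ, h, hs => by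
      rw [disjList, sat_or]
      rcases List.mem_cons.1 h with rfl | h
      · exact Or.inl hs
      · exact Or.inr (sat_disjList M x (χ' :: rest) ψ h hs)

/-- K_n is valid on every n-model under the diagonal semantics. -/
theorem Kn_valid (n : ℕ) (hn : 1 ≤ n) (φ : Fin (n+1) → Formula)
    (M : NModel n) (w : M.World)
    (h : ∀ i : Fin (n+1), Sat M w (Formula.box (φ i))) :
    Sat M w (Formula.box (pairDisj n φ)) := by
  intro v hv
  choose f hf using fun i : Fin (n+1) => h i v hv
  obtain ⟨i, j, hne, hfe⟩ : ∃ i j : Fin (n+1), i ≠ j ∧ f i = f j := by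
    have : ¬ Function.Injective f := by
      intro hinj
      have := Fintype.card_le_of_injective f hinj
      simp at this
    simp only [Function.Injective, not_forall] at this
    obtain ⟨i, j, hfe, hne⟩ := this
    exact ⟨i, j, hne, hfe⟩
  rcases hne.lt_or_gt with hlt | hlt
  · refine ⟨f i, sat_disjList M _ _ (Formula.and (φ i) (φ j)) ?_ ⟨hf i, hfe ▸ hf j⟩⟩
    exact List.mem_filterMap.2 ⟨(i, j), by simp [List.pair_mem_product], by simp [hlt]⟩
  · refine ⟨f i, sat_disjList M _ _ (Formula.and (φ j) (φ i)) ?_ ⟨hfe ▸ hf j, hf i⟩⟩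
    exact List.mem_filterMap.2 ⟨(j, i), by simp [List.pair_mem_product], by simp [hlt]⟩

end WAML
end

section
/- For all m, n with 1 ≤ m < n: every theorem of 𝕂_n is a theorem of 𝕂_m, while the axiom K_m: □p₀ ∧ … ∧ □p_m → □⋁_{0≤i<j≤m}(p_i ∧ p_j) is not a theorem of 𝕂_n; hence 𝕂_n is strictly weaker than 𝕂_m. -/
namespace WAML

section Aux

/-! ### Generic valuation lemmas -/

variable (v : Formula → Prop)
  (hneg : ∀ ψ, v (Formula.neg ψ) ↔ ¬ v ψ)
  (hand : ∀ ψ χ, v (Formula.and ψ χ) ↔ v ψ ∧ v χ)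

include hneg hand

lemma val_imp (φ ψ : Formula) : v (Formula.imp φ ψ) ↔ (v φ → v ψ) := by
  simp only [Formula.imp, hneg, hand]; tauto

lemma val_or (φ ψ : Formula) : v (Formula.or φ ψ) ↔ (v φ ∨ v ψ) := by
  simp only [Formula.or, hneg, hand]; tauto

lemma val_bot : ¬ v Formula.bot := by
  simp only [Formula.bot, hneg, hand]; tauto

lemma val_conjList : ∀ L : List Formula, v (conjList L) ↔ ∀ ψ ∈ L, v ψ := by
  intro L
  induction L with
  | nil => simpa [conjList, hneg] using val_bot v hneg hand
  | cons φ L ih =>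
    cases L with
    | nil => simp [conjList]
    | cons χ L' =>
      rw [conjList, hand, ih]
      simp only [List.mem_cons]
      aesop

lemma val_disjList : ∀ L : List Formula, v (disjList L) ↔ ∃ ψ ∈ L, v ψ := by
  intro L
  induction L with
  | nil => simpa [disjList] using val_bot v hneg hand
  | cons φ L ih =>
    cases L with
    | nil => simp [disjList]
    | cons χ L' =>
      rw [disjList, val_or v hneg hand, ih]
      simp only [List.mem_cons]
      aesop

end Aux

/-! ### Tautology lemmas -/

lemma taut_trans (a b c : Formula) :
    Tautology ((a.imp b).imp ((b.imp c).imp (a.imp c))) := by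
  intro v hneg hand
  simp only [val_imp v hneg hand]
  tauto

lemma KProof.trans {n : ℕ} {a b c : Formula} (h1 : KProof n (a.imp b))
    (h2 : KProof n (b.imp c)) : KProof n (a.imp c) :=
  (KProof.taut (taut_trans a b c)).mp h1 |>.mp h2

lemma taut_conj_weaken {L L' : List Formula} (h : ∀ ψ ∈ L', ψ ∈ L) :
    Tautology ((conjList L).imp (conjList L')) := by
  intro v hneg hand
  rw [val_imp v hneg hand, val_conjList v hneg hand, val_conjList v hneg hand]
  exact fun hv ψ hm => hv ψ (h ψ hm)

lemma taut_disj_mono {L L' : List Formula} (h : ∀ ψ ∈ L, ψ ∈ L') :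
    Tautology ((disjList L).imp (disjList L')) := by
  intro v hneg hand
  rw [val_imp v hneg hand, val_disjList v hneg hand, val_disjList v hneg hand]
  rintro ⟨ψ, hm, hv⟩
  exact ⟨ψ, h ψ hm, hv⟩

lemma mem_pairDisj_list {k : ℕ} (φ : Fin (k+1) → Formula) {i j : Fin (k+1)} (hij : i < j) :
    Formula.and (φ i) (φ j) ∈ (((List.finRange (k+1)).product (List.finRange (k+1))).filterMap
      (fun p => if p.1 < p.2 then some (Formula.and (φ p.1) (φ p.2)) else none)) := by
  rw [List.mem_filterMap]
  exact ⟨(i, j), by simp [List.pair_mem_product], by simp [hij]⟩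

/-! ### K_n is provable in 𝕂_m for m ≤ n -/

lemma KnAxiom_of_le {m n : ℕ} (h : m ≤ n) (φ : Fin (n+1) → Formula) :
    KProof m (KnAxiom n φ) := by
  have hle : m + 1 ≤ n + 1 := by omega
  set φ' : Fin (m+1) → Formula := fun i => φ (Fin.castLE hle i) with hφ'
  have t1 : Tautology ((conjList ((List.finRange (n+1)).map fun i => (φ i).box)).imp
      (conjList ((List.finRange (m+1)).map fun i => (φ' i).box))) := by
    apply taut_conj_weaken
    intro ψ hψ
    simp only [List.mem_map, List.mem_finRange, true_and] at hψ ⊢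
    obtain ⟨i, rfl⟩ := hψ
    exact ⟨Fin.castLE hle i, rfl⟩
  have t2 : Tautology ((pairDisj m φ').imp (pairDisj n φ)) := by
    apply taut_disj_mono
    intro ψ hψ
    rw [List.mem_filterMap] at hψ
    obtain ⟨⟨a, b⟩, -, hab⟩ := hψ
    by_cases hab' : a < b
    · rw [if_pos hab', Option.some_inj] at hab
      rw [← hab]
      exact mem_pairDisj_list φ (show Fin.castLE hle a < Fin.castLE hle b from hab')
    · simp [hab'] at hab
  exact KProof.trans (KProof.taut t1) (KProof.trans (KProof.kn φ') (KProof.rm (KProof.taut t2)))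

/-! ### Soundness of 𝕂_n over n-models (n > 0) -/

lemma satNeg {n : ℕ} (M : NModel n) (w : M.World) :
    ∀ ψ, Sat M w (Formula.neg ψ) ↔ ¬ Sat M w ψ := fun _ => Iff.rfl

lemma satAnd {n : ℕ} (M : NModel n) (w : M.World) :
    ∀ ψ χ, Sat M w (Formula.and ψ χ) ↔ Sat M w ψ ∧ Sat M w χ := fun _ _ => Iff.rfl

lemma kn_valid {n : ℕ} (φ : Fin (n+1) → Formula) (M : NModel n) (w : M.World) :
    Sat M w (KnAxiom n φ) := by
  rw [KnAxiom, val_imp (Sat M w) (satNeg M w) (satAnd M w)]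
  intro hc
  rw [val_conjList (Sat M w) (satNeg M w) (satAnd M w)] at hc
  have hbox : ∀ i : Fin (n+1), Sat M w ((φ i).box) := fun i => hc _ (by simp)
  intro vt hR
  have hk : ∀ i : Fin (n+1), ∃ k : Fin n, Sat M (vt k) (φ i) := fun i => hbox i vt hR
  choose k hkk using hk
  obtain ⟨i, j, hne, heq⟩ := Fintype.exists_ne_map_eq_of_card_lt k (by simp)
  have key : ∀ i j : Fin (n+1), i < j → k i = k j → ∃ l, Sat M (vt l) (pairDisj n φ) := by
    intro i j hij heq
    refine ⟨k i, ?_⟩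
    simp only [pairDisj]
    rw [val_disjList (Sat M _) (satNeg M _) (satAnd M _)]
    exact ⟨_, mem_pairDisj_list φ hij, hkk i, heq ▸ hkk j⟩
  rcases lt_or_gt_of_ne hne with hij | hij
  · exact key i j hij heq
  · exact key j i hij heq.symm

lemma sound {n : ℕ} (hn : 0 < n) :
    ∀ {φ : Formula}, KProof n φ → ∀ (M : NModel n) (w : M.World), Sat M w φ := by
  intro φ h
  induction h with
  | taut ht => exact fun M w => ht (Sat M w) (satNeg M w) (satAnd M w)
  | kn ψ => exact fun M w => kn_valid ψ M w
  | @mp φ ψ _ _ ih1 ih2 =>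
    intro M w
    have h1 := ih1 M w
    rw [val_imp (Sat M w) (satNeg M w) (satAnd M w)] at h1
    exact h1 (ih2 M w)
  | nec _ ih => exact fun M w vt _ => ⟨⟨0, hn⟩, ih M (vt ⟨0, hn⟩)⟩
  | @rm φ ψ _ ih =>
    intro M w
    rw [val_imp (Sat M w) (satNeg M w) (satAnd M w)]
    intro hb vt hR
    obtain ⟨i, hi⟩ := hb vt hR
    refine ⟨i, ?_⟩
    have h1 := ih M (vt i)
    rw [val_imp (Sat M _) (satNeg M _) (satAnd M _)] at h1
    exact h1 hi

/-! ### The countermodel -/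

def CM (n : ℕ) : NModel n where
  World := Option (Fin n)
  nonempty := ⟨none⟩
  R := fun w t => w = none ∧ t = fun k => some k
  V := fun w p => ∃ k : Fin n, w = some k ∧ (k : ℕ) = p

lemma cm_not_sat {m n : ℕ} (hmn : m < n) :
    ¬ Sat (CM n) none (KnAxiom m (fun i => Formula.atom i.val)) := by
  rw [KnAxiom]
  intro h
  replace h := (val_imp (Sat (CM n) none) (satNeg _ _) (satAnd _ _) _ _).mp h
  have hconj : Sat (CM n) none
      (conjList ((List.finRange (m+1)).map fun i : Fin (m+1) => (Formula.atom (i : ℕ)).box)) := by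
    refine (val_conjList (Sat (CM n) none) (satNeg _ _) (satAnd _ _) _).mpr ?_
    intro ψ hψ
    rw [List.mem_map] at hψ
    obtain ⟨i, -, rfl⟩ := hψ
    intro vt hR
    have hi := i.isLt
    refine ⟨⟨(i : ℕ), by omega⟩, ?_⟩
    rw [hR.2]
    exact ⟨⟨(i : ℕ), by omega⟩, rfl, rfl⟩
  have hbox := h hconj (fun k => some k) ⟨rfl, rfl⟩
  obtain ⟨l, hl⟩ := hbox
  simp only [pairDisj] at hl
  replace hl := (val_disjList (Sat (CM n) _) (satNeg _ _) (satAnd _ _) _).mp hl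
  obtain ⟨ψ, hmem, hsat⟩ := hl
  rw [List.mem_filterMap] at hmem
  obtain ⟨⟨a, b⟩, -, hab⟩ := hmem
  by_cases hab' : a < b
  · rw [if_pos hab', Option.some_inj] at hab
    rw [← hab] at hsat
    obtain ⟨⟨k1, hk1, hk1'⟩, ⟨k2, hk2, hk2'⟩⟩ := hsat
    rw [hk1, Option.some_inj] at hk2
    subst hk2
    dsimp only at hk1' hk2'
    have : (a : ℕ) = (b : ℕ) := by omega
    exact absurd (Fin.ext this) (Fin.ne_of_lt hab')
  · simp [hab'] at hab

/-- for 1 ≤ m < n, 𝕂_n is strictly weaker than 𝕂_m: every theorem of 𝕂_n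
is a theorem of 𝕂_m, but the axiom K_m (on distinct atoms) is not a theorem of 𝕂_n. -/
theorem Kn_strictly_weaker (m n : ℕ) (hm : 1 ≤ m) (hmn : m < n) :
    (∀ φ : Formula, KProof n φ → KProof m φ) ∧
    ¬ KProof n (KnAxiom m (fun i => Formula.atom i.val)) := by
  constructor
  · intro φ h
    induction h with
    | taut ht => exact KProof.taut ht
    | kn ψ => exact KnAxiom_of_le (le_of_lt hmn) ψ
    | mp _ _ ih1 ih2 => exact ih1.mp ih2
    | nec _ ih => exact ih.nec
    | rm _ ih => exact ih.rm
  · intro h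
    exact cm_not_sat hmn (sound (by omega) h (CM n) none)

end WAML
end

section
/- WAML formulas are invariant under wa^n-bisimulation: if Z is a wa^n-bisimulation between n-models M and M' and w Z w', then for every WAML formula φ, M,w ⊨ φ iff M',w' ⊨ φ. -/
namespace WAML

/-- WAML formulas are invariant under wa^n-bisimulation. -/
theorem bisim_invariance (n : ℕ) (M M' : NModel n) (Z : M.World → M'.World → Prop)
    (hZ : IsBisim M M' Z) (w : M.World) (w' : M'.World) (h : Z w w') (φ : Formula) :
    Sat M w φ ↔ Sat M' w' φ := by
  obtain ⟨-, hV, hforth, hback⟩ := hZ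
  induction φ generalizing w w' with
  | atom p => exact hV w w' h p
  | neg φ ih => exact not_congr (ih w w' h)
  | and φ ψ ihφ ihψ => exact and_congr (ihφ w w' h) (ihψ w w' h)
  | box φ ih =>
    constructor
    · intro hs v' hR'
      obtain ⟨v, hR, hrel⟩ := hback w w' v' h hR'
      obtain ⟨i, hi⟩ := hs v hR
      obtain ⟨j, hj⟩ := hrel i
      exact ⟨j, (ih _ _ hj).mp hi⟩
    · intro hs v hR
      obtain ⟨v', hR', hrel⟩ := hforth w w' v h hR
      obtain ⟨j, hj⟩ := hs v' hR'
      obtain ⟨i, hi⟩ := hrel j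
      exact ⟨i, (ih _ _ hi).mpr hj⟩

end WAML
end

section
/- The root map of the unraveling is a wa^n-bisimulation: for any n-model M = (W,R,V) and w ∈ W, the relation {(s, r(s)) : s a world of the unraveling M_w} is a wa^n-bisimulation between M_w and M; in particular the root ⟨((w,…,w),1)⟩ of M_w is wa^n-bisimilar to w in M, so they satisfy the same WAML formulas. -/
namespace WAML

theorem sat_of_bisim {n : ℕ} {M M' : NModel n} {Z : M.World → M'.World → Prop}
    (hZ : IsBisim M M' Z) :
    ∀ (φ : Formula) (w : M.World) (w' : M'.World), Z w w' →
      (Sat M w φ ↔ Sat M' w' φ) := by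
  obtain ⟨-, hinv, hforth, hback⟩ := hZ
  intro φ
  induction φ with
  | atom p => intro w w' hw; exact hinv w w' hw p
  | neg φ ih => intro w w' hw; simp only [Sat]; rw [ih w w' hw]
  | and φ ψ ihφ ihψ => intro w w' hw; simp only [Sat]; rw [ihφ w w' hw, ihψ w w' hw]
  | box φ ih =>
    intro w w' hw
    simp only [Sat]
    constructor
    · intro h v' hv'
      obtain ⟨v, hv, hrel⟩ := hback w w' v' hw hv'
      obtain ⟨i, hi⟩ := h v hv
      obtain ⟨j, hj⟩ := hrel i
      exact ⟨j, (ih (v i) (v' j) hj).mp hi⟩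
    · intro h v hv
      obtain ⟨v', hv', hrel⟩ := hforth w w' v hw hv
      obtain ⟨j, hj⟩ := h v' hv'
      obtain ⟨i, hi⟩ := hrel j
      exact ⟨i, (ih (v i) (v' j) hi).mpr hj⟩

theorem rmap_concat {n : ℕ} (M : NModel n) (w : M.World)
    (s : List ((Fin n → M.World) × Fin n)) (a : (Fin n → M.World) × Fin n) :
    rmap M w (s ++ [a]) = a.1 a.2 := by
  simp [rmap]

theorem rmap_last {n : ℕ} (M : NModel n) (w : M.World)
    {s : List ((Fin n → M.World) × Fin n)} {a} (h : s.getLast? = some a) :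
    rmap M w s = a.1 a.2 := by
  simp [rmap, h]

/-- the root map of the unraveling is a wa^n-bisimulation between M_w and M;
in particular the root of M_w is wa^n-bisimilar to w, so they satisfy the same formulas. -/
theorem unravel_bisim (n : ℕ) [NeZero n] (M : NModel n) (w : M.World) :
    IsBisim (Unravel M w) M (fun s u => rmap M w s.val = u) ∧
    Bisimilar (Unravel M w) M (unravelRoot M w) w ∧
    (∀ φ : Formula, Sat (Unravel M w) (unravelRoot M w) φ ↔ Sat M w φ) := by
  have hbisim : IsBisim (Unravel M w) M (fun s u => rmap M w s.val = u) := by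
    refine ⟨⟨unravelRoot M w, w, ?_⟩, ?_, ?_, ?_⟩
    · simp [unravelRoot, rmap]
    · rintro s u hu p
      subst hu
      exact Iff.rfl
    · rintro s u t hu ⟨hR, -⟩
      subst hu
      exact ⟨fun i => rmap M w (t i).val, hR, fun j => ⟨j, rfl⟩⟩
    · rintro s u v' hu hR
      subst hu
      -- s.val is nonempty (GoodSeq), get its last element
      obtain ⟨⟨rest, hhead⟩, hchain⟩ := s.2
      have hne : s.val ≠ [] := by rw [hhead]; simp
      obtain ⟨a, ha⟩ := Option.isSome_iff_exists.mp (List.getLast?_isSome.mpr hne)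
      have hr : rmap M w s.val = a.1 a.2 := rmap_last M w ha
      refine ⟨fun i => ⟨s.val ++ [(v', i)], ?_, ?_⟩, ⟨?_, fun i => ⟨(v', i), rfl⟩⟩, ?_⟩
      · exact ⟨rest ++ [(v', i)], by rw [hhead]; simp⟩
      · unfold List.Chain'; rw [List.isChain_append]
        refine ⟨hchain, List.isChain_singleton _, ?_⟩
        intro x hx y hy
        simp only [List.head?_cons, Option.mem_def, Option.some.injEq] at hy
        rw [Option.mem_def, ha] at hx
        cases hx; cases hy
        rw [← hr]; exact hR
      · convert hR using 2
        rename_i i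
        exact rmap_concat M w s.val (v', i)
      · intro i
        exact ⟨i, rmap_concat M w s.val (v', i)⟩
  have hroot : rmap M w (unravelRoot M w).val = w := by simp [unravelRoot, rmap]
  exact ⟨hbisim, ⟨_, hbisim, hroot⟩,
    fun φ => sat_of_bisim hbisim φ (unravelRoot M w) w hroot⟩

end WAML
end

section
/- Locality lemma: let α(x) be a first-order L¹_n-formula of quantifier rank q that is invariant under wa^n-bisimulation, and let l = 2^q − 1. Then for every n-model M and every world w of M: M ⊨ α[w] if and only if M_w|_l ⊨ α[⟨((w,…,w),1)⟩], where M_w|_l is the submodel of the unraveling M_w consisting of all worlds of level at most l (sequences of length at most l+1). -/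
namespace WAML

namespace Loc

open Classical in
noncomputable def com {α : Type*} : List α → List α → ℕ
  | a::s, b::t => if a = b then com s t + 1 else 0
  | _, _ => 0

theorem com_nil_left {α : Type*} (t : List α) : com [] t = 0 := by cases t <;> rfl

theorem com_le_left {α : Type*} (s t : List α) : com s t ≤ s.length := by
  induction s generalizing t with
  | nil => simp [com_nil_left]
  | cons a s ih =>
    cases t with
    | nil => simp [com]
    | cons b t =>
      simp only [com, List.length_cons]
      split
      · exact Nat.succ_le_succ (ih t)
      · omega

theorem com_comm {α : Type*} (s t : List α) : com s t = com t s := by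
  induction s generalizing t with
  | nil => cases t <;> rfl
  | cons a s ih =>
    cases t with
    | nil => rfl
    | cons b t =>
      simp only [com]
      by_cases h : a = b
      · subst h; simp [ih]
      · rw [if_neg h, if_neg (fun h' => h h'.symm)]

theorem com_le_right {α : Type*} (s t : List α) : com s t ≤ t.length := by
  rw [com_comm]; exact com_le_left t s

theorem com_append {α : Type*} (s r : List α) : com s (s ++ r) = s.length := by
  induction s with
  | nil => simp [com_nil_left]
  | cons a s ih => simp [com, ih]

theorem com_min {α : Type*} (s t u : List α) : min (com s t) (com t u) ≤ com s u := by
  induction s generalizing t u with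
  | nil => simp [com_nil_left]
  | cons a s ih =>
    cases t with
    | nil => simp [com]
    | cons b t =>
      cases u with
      | nil => simp [com]
      | cons c u =>
        simp only [com]
        by_cases hab : a = b
        · by_cases hbc : b = c
          · have : a = c := hab.trans hbc
            simp [hab, hbc, this]
            have := ih t u
            omega
          · simp [hbc]
        · simp [hab]

noncomputable def D {α : Type*} (s t : List α) : ℕ :=
  (s.length - com s t) + (t.length - com s t)

theorem D_self {α : Type*} (s : List α) : D s s = 0 := by
  have := com_append s []
  simp at this
  simp [D, this]

theorem D_comm {α : Type*} (s t : List α) : D s t = D t s := by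
  simp [D, com_comm s t]; omega

theorem D_concat {α : Type*} (s : List α) (a : α) : D s (s ++ [a]) = 1 := by
  simp [D, com_append]

theorem D_triangle {α : Type*} (s t u : List α) : D s u ≤ D s t + D t u := by
  have h1 := com_le_left s t
  have h2 := com_le_right s t
  have h3 := com_le_left t u
  have h4 := com_le_right t u
  have h5 := com_min s t u
  have h6 := com_le_left s u
  have h7 := com_le_right s u
  simp [D] at *
  omega

theorem len_le_D {α : Type*} (s t : List α) : t.length ≤ s.length + D s t := by
  have h1 := com_le_left s t
  have h2 := com_le_right s t
  simp [D]; omega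

end Loc

namespace WAMLAux
open WAML

variable {n : ℕ}

/-- Disjoint union of a family of n-models. -/
def DU (ι : Type) [Nonempty ι] (F : ι → NModel n) : NModel n where
  World := Σ i, (F i).World
  nonempty := ⟨⟨Classical.arbitrary ι, Classical.choice (F _).nonempty⟩⟩
  R := fun z v => ∃ u : Fin n → (F z.1).World,
    (∀ i, v i = ⟨z.1, u i⟩) ∧ (F z.1).R z.2 u
  V := fun z p => (F z.1).V z.2 p

/-- Inclusion of a component into the disjoint union is a bisimulation. -/
theorem incl_bisim (ι : Type) [Nonempty ι] (F : ι → NModel n) (c : ι) :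
    IsBisim (F c) (DU ι F) (fun x z => z = ⟨c, x⟩) := by
  refine ⟨⟨Classical.choice (F c).nonempty, _, rfl⟩, ?_, ?_, ?_⟩
  · rintro x z rfl p; exact Iff.rfl
  · rintro x z v rfl hR
    exact ⟨fun i => ⟨c, v i⟩, ⟨v, fun i => rfl, hR⟩, fun j => ⟨j, rfl⟩⟩
  · rintro x z v' rfl ⟨u, hu, hR⟩
    exact ⟨u, hR, fun i => ⟨i, hu i⟩⟩

variable [NeZero n] {M : NModel n} {w : M.World}

theorem goodseq_ne_nil {s : List ((Fin n → M.World) × Fin n)} (h : GoodSeq M w s) :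
    s ≠ [] := by
  obtain ⟨⟨rest, rfl⟩, -⟩ := h
  simp

theorem rmap_concat (s : List ((Fin n → M.World) × Fin n)) (a) :
    rmap M w (s ++ [a]) = a.1 a.2 := by
  simp [rmap, List.getLast?_concat]

theorem rmap_eq_getLast {s : List ((Fin n → M.World) × Fin n)} (h : s ≠ []) :
    rmap M w s = (s.getLast h).1 (s.getLast h).2 := by
  simp [rmap, List.getLast?_eq_getLast h]

theorem goodseq_concat {s : List ((Fin n → M.World) × Fin n)} (h : GoodSeq M w s)
    {v : Fin n → M.World} (hR : M.R (rmap M w s) v) (i : Fin n) :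
    GoodSeq M w (s ++ [(v, i)]) := by
  obtain ⟨⟨rest, hrest⟩, hchain⟩ := h
  have hne : s ≠ [] := by rw [hrest]; simp
  constructor
  · exact ⟨rest ++ [(v, i)], by rw [hrest]; simp⟩
  · apply List.IsChain.append hchain (List.isChain_singleton _)
    intro x hx y hy
    rw [List.getLast?_eq_getLast hne, Option.mem_some_iff] at hx
    simp only [List.head?_cons, Option.mem_some_iff] at hy
    subst hx; subst hy
    rw [rmap_eq_getLast hne] at hR
    exact hR

/-- Bisimulation between M and its unraveling. -/
theorem bisim_unravel (M : NModel n) (w : M.World) :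
    IsBisim M (Unravel M w) (fun v s => rmap M w s.val = v) := by
  refine ⟨⟨w, unravelRoot M w, rfl⟩, ?_, ?_, ?_⟩
  · rintro v s rfl p; exact Iff.rfl
  · rintro v s ve rfl hR
    refine ⟨fun i => ⟨s.val ++ [(ve, i)], goodseq_concat s.2 hR i⟩, ⟨?_, ?_⟩, ?_⟩
    · have : (fun i => rmap M w (s.val ++ [(ve, i)])) = ve := by
        funext i; rw [rmap_concat]
      simpa [this]
    · intro i; exact ⟨(ve, i), rfl⟩
    · intro j; exact ⟨j, rmap_concat _ _⟩
  · rintro v s t rfl ⟨hR, hext⟩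
    exact ⟨fun i => rmap M w (t i).val, hR, fun i => ⟨i, rfl⟩⟩

variable (M w) (l : ℕ)

/-- The family: full unraveling (true) and truncated unraveling (false), ℕ-many copies. -/
def Fam : ℕ × Bool → NModel n
  | (_, true) => Unravel M w
  | (_, false) => UnravelB M w l

/-- The big disjoint union. -/
def U : NModel n := DU (ℕ × Bool) (Fam M w l)

/-- Underlying sequence of a world of a component. -/
def seqOf : ∀ (c : ℕ × Bool), (Fam M w l c).World → List ((Fin n → M.World) × Fin n)
  | (_, true), x => x.val
  | (_, false), x => x.val

/-- Underlying sequence of a world of U. -/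
def sq (z : (U M w l).World) : List ((Fin n → M.World) × Fin n) := seqOf M w l z.1 z.2

variable {M w l}

theorem seqOf_good (c : ℕ × Bool) (x : (Fam M w l c).World) :
    GoodSeq M w (seqOf M w l c x) := by
  obtain ⟨k, b⟩ := c; cases b
  · exact x.2.1
  · exact x.2

theorem seqOf_len (c : ℕ × Bool) (hc : c.2 = false) (x : (Fam M w l c).World) :
    (seqOf M w l c x).length ≤ l + 1 := by
  obtain ⟨k, b⟩ := c
  cases b
  · exact x.2.2
  · simp at hc

theorem seqOf_inj (c : ℕ × Bool) (x y : (Fam M w l c).World)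
    (h : seqOf M w l c x = seqOf M w l c y) : x = y := by
  obtain ⟨k, b⟩ := c; cases b
  · exact Subtype.ext h
  · exact Subtype.ext h

/-- Construct a world of a component from a sequence. -/
def mkW (c : ℕ × Bool) (s : List ((Fin n → M.World) × Fin n)) (hg : GoodSeq M w s)
    (hl : c.2 = false → s.length ≤ l + 1) : (Fam M w l c).World :=
  match c, hl with
  | (_, true), _ => ⟨s, hg⟩
  | (_, false), hl => ⟨s, hg, hl rfl⟩

theorem seqOf_mkW (c : ℕ × Bool) (s) (hg) (hl) :
    seqOf M w l c (mkW c s hg hl) = s := by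
  obtain ⟨k, b⟩ := c; cases b <;> rfl

theorem U_ext {z z' : (U M w l).World} (h1 : z.1 = z'.1) (h2 : sq M w l z = sq M w l z') :
    z = z' := by
  obtain ⟨c, x⟩ := z; obtain ⟨c', x'⟩ := z'
  cases h1
  exact congrArg _ (seqOf_inj c x x' h2)

theorem U_V_char (z : (U M w l).World) (p : ℕ) :
    (U M w l).V z p ↔ M.V (rmap M w (sq M w l z)) p := by
  obtain ⟨⟨k, b⟩, x⟩ := z
  cases b <;> exact Iff.rfl

theorem Fam_R_char (c : ℕ × Bool) (x : (Fam M w l c).World)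
    (u : Fin n → (Fam M w l c).World) :
    (Fam M w l c).R x u ↔
      (M.R (rmap M w (seqOf M w l c x)) (fun i => rmap M w (seqOf M w l c (u i))) ∧
        ∀ i, ∃ a, seqOf M w l c (u i) = seqOf M w l c x ++ [a]) := by
  obtain ⟨k, b⟩ := c; cases b <;> exact Iff.rfl

theorem U_R_char (z : (U M w l).World) (v : Fin n → (U M w l).World) :
    (U M w l).R z v ↔
      ((∀ i, (v i).1 = z.1) ∧
        M.R (rmap M w (sq M w l z)) (fun i => rmap M w (sq M w l (v i))) ∧
        ∀ i, ∃ a, sq M w l (v i) = sq M w l z ++ [a]) := by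
  constructor
  · rintro ⟨u, hu, hR⟩
    rw [Fam_R_char] at hR
    have hsq : ∀ i, sq M w l (v i) = seqOf M w l z.1 (u i) := by
      intro i; rw [hu i]; rfl
    refine ⟨fun i => by rw [hu i], ?_, ?_⟩
    · convert hR.1 using 2 with i
      rfl
      rw [hsq i]
    · intro i; rw [hsq i]; exact hR.2 i
  · rintro ⟨hc, hR, hext⟩
    have : ∀ i, ∃ x : (Fam M w l z.1).World, v i = ⟨z.1, x⟩ := by
      intro i
      rcases hv : v i with ⟨c, x⟩
      have h := hc i
      rw [hv] at h
      subst h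
      exact ⟨x, rfl⟩
    choose u hu using this
    refine ⟨u, hu, ?_⟩
    rw [Fam_R_char]
    have hsq : ∀ i, sq M w l (v i) = seqOf M w l z.1 (u i) := by
      intro i; rw [hu i]; rfl
    constructor
    · convert hR using 2 with i
      rfl
      rw [← hsq i]
    · intro i; rw [← hsq i]; exact hext i

open Loc

variable (M w l)

/-- The EF-game invariant at rank r. -/
def Inv (r : ℕ) {k : ℕ} (a b : Fin k → (U M w l).World) : Prop :=
  (∀ i, sq M w l (a i) = sq M w l (b i)) ∧
  (∀ i j, D (sq M w l (a i)) (sq M w l (a j)) ≤ 2 ^ r →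
    ((a i).1 = (a j).1 ↔ (b i).1 = (b j).1)) ∧
  (∀ i, (a i).1.2 = (b i).1.2 ∨ (sq M w l (a i)).length + 2 ^ r ≤ l + 2)

variable {M w l}

theorem Inv.symm {r k} {a b : Fin k → (U M w l).World} (h : Inv M w l r a b) :
    Inv M w l r b a := by
  obtain ⟨h1, h2, h3⟩ := h
  refine ⟨fun i => (h1 i).symm, fun i j hd => ?_, fun i => ?_⟩
  · rw [← h1 i, ← h1 j] at hd
    exact (h2 i j hd).symm
  · rcases h3 i with h | h
    · exact Or.inl h.symm
    · rw [h1 i] at h; exact Or.inr h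

theorem Inv.mono {r k} {a b : Fin k → (U M w l).World} (h : Inv M w l (r+1) a b) :
    Inv M w l r a b := by
  obtain ⟨h1, h2, h3⟩ := h
  have hpow : (2:ℕ) ^ r ≤ 2 ^ (r+1) := Nat.pow_le_pow_right (by norm_num) (by omega)
  refine ⟨h1, fun i j hd => h2 i j (le_trans hd hpow), fun i => ?_⟩
  rcases h3 i with h | h
  · exact Or.inl h
  · exact Or.inr (by omega)

theorem forth {r k} {a b : Fin k → (U M w l).World} (h : Inv M w l (r+1) a b)
    (x : (U M w l).World) :
    ∃ y, Inv M w l r (Fin.snoc a x) (Fin.snoc b y) := by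
  have hmono := Inv.mono h
  obtain ⟨h1, h2, h3⟩ := h
  obtain ⟨g1, g2, g3⟩ := hmono
  have hpow1 : (1:ℕ) ≤ 2 ^ r := Nat.one_le_two_pow
  have hpow2 : (2:ℕ) ^ (r+1) = 2 ^ r + 2 ^ r := by ring
  -- generic assembly of the new position
  have assemble : ∀ y : (U M w l).World, sq M w l y = sq M w l x →
      (∀ j, D (sq M w l x) (sq M w l (a j)) ≤ 2 ^ r → (x.1 = (a j).1 ↔ y.1 = (b j).1)) →
      (x.1.2 = y.1.2 ∨ (sq M w l x).length + 2 ^ r ≤ l + 2) →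
      Inv M w l r (Fin.snoc a x) (Fin.snoc b y) := by
    intro y hsqy key hty
    refine ⟨fun j => ?_, fun j j' => ?_, fun j => ?_⟩
    · refine Fin.lastCases ?_ (fun j => ?_) j
      · simp only [Fin.snoc_last]; exact hsqy.symm
      · simp only [Fin.snoc_castSucc]; exact g1 j
    · refine Fin.lastCases ?_ (fun j => ?_) j
      · refine Fin.lastCases ?_ (fun j' => ?_) j'
        · simp
        · simp only [Fin.snoc_last, Fin.snoc_castSucc]
          intro hd
          exact key j' hd
      · refine Fin.lastCases ?_ (fun j' => ?_) j'
        · simp only [Fin.snoc_last, Fin.snoc_castSucc]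
          intro hd
          rw [D_comm] at hd
          have hk := key j hd
          constructor
          · intro hx; exact (hk.mp hx.symm).symm
          · intro hb; exact (hk.mpr hb.symm).symm
        · simp only [Fin.snoc_castSucc]
          exact g2 j j'
    · refine Fin.lastCases ?_ (fun j => ?_) j
      · simp only [Fin.snoc_last]
        rcases hty with ht | ht
        · exact Or.inl ht
        · exact Or.inr ht
      · simp only [Fin.snoc_castSucc]
        exact g3 j
  by_cases hcl : ∃ i, (a i).1 = x.1 ∧ D (sq M w l x) (sq M w l (a i)) ≤ 2 ^ r
  case pos =>
    obtain ⟨i, hci, hdi⟩ := hcl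
    have hlen : (b i).1.2 = false → (sq M w l x).length ≤ l + 1 := by
      intro hf
      rcases h3 i with ht | ht
      · have hx2 : x.1.2 = false := by rw [← hci]; rw [ht]; exact hf
        exact seqOf_len x.1 hx2 x.2
      · have hle := len_le_D (sq M w l (a i)) (sq M w l x)
        rw [D_comm] at hle
        omega
    have hy := seqOf_mkW (M := M) (w := w) (l := l) (b i).1 (sq M w l x)
      (seqOf_good x.1 x.2) hlen
    set y : (U M w l).World :=
      ⟨(b i).1, mkW (b i).1 (sq M w l x) (seqOf_good x.1 x.2) hlen⟩ with hydef
    refine ⟨y, assemble y hy ?_ ?_⟩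
    · intro j hd
      have hij : D (sq M w l (a i)) (sq M w l (a j)) ≤ 2 ^ (r+1) := by
        have htr := D_triangle (sq M w l (a i)) (sq M w l x) (sq M w l (a j))
        rw [D_comm (sq M w l (a i)) (sq M w l x)] at htr
        omega
      have hk := h2 i j hij
      constructor
      · intro hx
        exact hk.mp (hci.trans hx)
      · intro hb
        exact hci.symm.trans (hk.mpr hb)
    · rcases h3 i with ht | ht
      · left
        show x.1.2 = (b i).1.2
        rw [← hci]; exact ht
      · right
        have hle := len_le_D (sq M w l (a i)) (sq M w l x)
        rw [D_comm] at hle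
        omega
  case neg =>
    push_neg at hcl
    have hlen : ((Finset.univ.sup (fun j : Fin k => (b j).1.1) + 1, x.1.2) : ℕ × Bool).2 =
        false → (sq M w l x).length ≤ l + 1 := by
      intro hf
      exact seqOf_len x.1 hf x.2
    have hy := seqOf_mkW (M := M) (w := w) (l := l) _ (sq M w l x)
      (seqOf_good x.1 x.2) hlen
    set K := Finset.univ.sup (fun j : Fin k => (b j).1.1) + 1 with hK
    have hfresh : ∀ j, ((K, x.1.2) : ℕ × Bool) ≠ (b j).1 := by
      intro j hjeq
      have hsup : (b j).1.1 ≤ Finset.univ.sup (fun j : Fin k => (b j).1.1) :=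
        Finset.le_sup (f := fun j : Fin k => (b j).1.1) (Finset.mem_univ j)
      have heq1 : K = (b j).1.1 := congrArg Prod.fst hjeq
      omega
    set y : (U M w l).World :=
      ⟨(K, x.1.2), mkW (K, x.1.2) (sq M w l x) (seqOf_good x.1 x.2) hlen⟩ with hydef
    refine ⟨y, assemble y hy ?_ (Or.inl rfl)⟩
    intro j hd
    constructor
    · intro hx
      exact absurd hd (by have := hcl j hx.symm; omega)
    · intro hb
      exact absurd hb (by exact fun hb' => hfresh j hb')

theorem ef_main {k : ℕ} (φ : FO n k) :
    ∀ (r : ℕ), φ.qr ≤ r → ∀ (a b : Fin k → (U M w l).World),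
    Inv M w l r a b →
    (FO.Realize (U M w l) φ a ↔ FO.Realize (U M w l) φ b) := by
  induction φ with
  | pred p i =>
    intro r _ a b hinv
    show (U M w l).V (a i) p ↔ (U M w l).V (b i) p
    rw [U_V_char, U_V_char, hinv.1 i]
  | rel ts =>
    intro r _ a b hinv
    have dir : ∀ (a b : Fin _ → (U M w l).World), Inv M w l r a b →
        FO.Realize (U M w l) (.rel ts) a → FO.Realize (U M w l) (.rel ts) b := by
      rintro a b ⟨h1, h2, h3⟩ hR
      show (U M w l).R (b (ts 0)) (fun i => b (ts i.succ))
      rw [U_R_char]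
      obtain ⟨hc, hM, hext⟩ := (U_R_char (a (ts 0)) (fun i => a (ts i.succ))).mp hR
      refine ⟨fun i => ?_, ?_, fun i => ?_⟩
      · obtain ⟨p, hp⟩ := hext i
        have hd : D (sq M w l (a (ts 0))) (sq M w l (a (ts i.succ))) ≤ 2 ^ r := by
          rw [hp, D_concat]
          exact Nat.one_le_two_pow
        exact (((h2 _ _ hd).mp (hc i).symm)).symm
      · have hfun : (fun (i : Fin n) => rmap M w (sq M w l (b (ts i.succ)))) =
            fun (i : Fin n) => rmap M w (sq M w l (a (ts i.succ))) := by
          funext i; rw [h1 (ts i.succ)]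
        rw [hfun, ← h1 (ts 0)]
        exact hM
      · obtain ⟨p, hp⟩ := hext i
        exact ⟨p, by rw [← h1 (ts i.succ), ← h1 (ts 0)]; exact hp⟩
    exact ⟨dir a b hinv, dir b a hinv.symm⟩
  | eq i j =>
    intro r _ a b hinv
    have dir : ∀ (a b : Fin _ → (U M w l).World), Inv M w l r a b →
        a i = a j → b i = b j := by
      rintro a b ⟨h1, h2, h3⟩ hx
      have h0 : D (sq M w l (a i)) (sq M w l (a j)) ≤ 2 ^ r := by
        rw [hx, D_self]; exact Nat.zero_le _
      exact U_ext ((h2 i j h0).mp (by rw [hx])) (by rw [← h1 i, ← h1 j, hx])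
    exact ⟨dir a b hinv, dir b a hinv.symm⟩
  | fal =>
    intro r _ a b _
    exact Iff.rfl
  | not φ ih =>
    intro r hqr a b hinv
    exact not_congr (ih r hqr a b hinv)
  | and φ ψ ih1 ih2 =>
    intro r hqr a b hinv
    have hm : max φ.qr ψ.qr ≤ r := hqr
    exact and_congr (ih1 r (le_trans (le_max_left _ _) hm) a b hinv)
      (ih2 r (le_trans (le_max_right _ _) hm) a b hinv)
  | or φ ψ ih1 ih2 =>
    intro r hqr a b hinv
    have hm : max φ.qr ψ.qr ≤ r := hqr
    exact or_congr (ih1 r (le_trans (le_max_left _ _) hm) a b hinv)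
      (ih2 r (le_trans (le_max_right _ _) hm) a b hinv)
  | imp φ ψ ih1 ih2 =>
    intro r hqr a b hinv
    have hm : max φ.qr ψ.qr ≤ r := hqr
    exact imp_congr (ih1 r (le_trans (le_max_left _ _) hm) a b hinv)
      (ih2 r (le_trans (le_max_right _ _) hm) a b hinv)
  | all φ ih =>
    intro r hqr a b hinv
    have hqr' : φ.qr + 1 ≤ r := hqr
    obtain ⟨r', rfl⟩ : ∃ r', r = r' + 1 := ⟨r - 1, by omega⟩
    constructor
    · intro ha z
      obtain ⟨x', hinv'⟩ := forth hinv.symm z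
      exact (ih r' (by omega) _ _ hinv'.symm).mp (ha x')
    · intro hb z
      obtain ⟨y', hinv'⟩ := forth hinv z
      exact (ih r' (by omega) _ _ hinv').mpr (hb y')

variable (M w l)

/-- The designated point in a full copy. -/
def pA : (U M w l).World := ⟨(0, true), unravelRoot M w⟩

/-- The designated point in a truncated copy. -/
def pB : (U M w l).World := ⟨(0, false), unravelBRoot M w l⟩

theorem sq_pA : sq M w l (pA M w l) = [((fun _ => w), (0 : Fin n))] := rfl

theorem sq_pB : sq M w l (pB M w l) = [((fun _ => w), (0 : Fin n))] := rfl

theorem init_inv (q : ℕ) (hl : 2 ^ q ≤ l + 1) :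
    Inv M w l q (fun _ : Fin 1 => pA M w l) (fun _ : Fin 1 => pB M w l) := by
  refine ⟨fun i => rfl, fun i j _ => ?_, fun i => ?_⟩
  · exact iff_of_true rfl rfl
  · right
    rw [sq_pA]
    simp
    omega

end WAMLAux
/-- locality lemma. If α(x) has quantifier rank q and is invariant under
wa^n-bisimulation, then with l = 2^q − 1, M ⊨ α[w] iff M_w|_l ⊨ α[root]. -/
theorem locality (n : ℕ) [NeZero n] (α : FO n 1) (hα : BisimInvariant n α)
    (M : NModel n) (w : M.World) :
    FO.Realize M α (fun _ => w) ↔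
    FO.Realize (UnravelB M w (2 ^ α.qr - 1)) α
      (fun _ => unravelBRoot M w (2 ^ α.qr - 1)) := by
  set q := α.qr with hq
  set l := 2 ^ q - 1 with hldef
  have hpow : (1:ℕ) ≤ 2 ^ q := Nat.one_le_two_pow
  have b1 := hα M (Unravel M w) (fun v s => rmap M w s.val = v) w (unravelRoot M w)
    (WAMLAux.bisim_unravel M w) rfl
  have b2 := hα (Unravel M w) (WAMLAux.U M w l)
    (fun x z => z = ⟨(0, true), x⟩) (unravelRoot M w) (WAMLAux.pA M w l)
    (WAMLAux.incl_bisim (ℕ × Bool) (WAMLAux.Fam M w l) (0, true)) rfl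
  have b3 := hα (UnravelB M w l) (WAMLAux.U M w l)
    (fun x z => z = ⟨(0, false), x⟩) (unravelBRoot M w l) (WAMLAux.pB M w l)
    (WAMLAux.incl_bisim (ℕ × Bool) (WAMLAux.Fam M w l) (0, false)) rfl
  have hmain := WAMLAux.ef_main α q le_rfl (fun _ => WAMLAux.pA M w l)
    (fun _ => WAMLAux.pB M w l) (WAMLAux.init_inv M w l q (by omega))
  exact ((b1.trans b2).trans hmain).trans b3.symm

end WAML
end
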